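/- Let Ω be an alternating bilinear 2-form on ℂ^n (not assumed nondegenerate on all of ℂ^n) such that for every nonempty subset I ⊆ {1,...,n} the restriction Ω|_{ℂ^n_I} is nondegenerate and the Ω-orientation of ℂ^n_I agrees with its complex orientation. Then for all nonempty I ⊆ {1,...,n}, all s ≥ 0, and all i ∈ {1,...,n}, the restriction of Ω + s·dx_i∧dy_i to ℂ^n_I is nondegenerate. -/

import Mathlib

set_option synthInstance.maxHeartbeats 1000000
set_option maxHeartbeats 1000000

open ExteriorAlgebra

/-- The real-linear functional `dx_i = Re ∘ z_i` on `ℂ^n`. -/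
noncomputable def dxF (n : ℕ) (i : Fin n) : Module.Dual ℝ (Fin n → ℂ) :=
  Complex.reLm.comp ((LinearMap.proj i : (Fin n → ℂ) →ₗ[ℂ] ℂ).restrictScalars ℝ)

/-- The real-linear functional `dy_i = Im ∘ z_i` on `ℂ^n`. -/
noncomputable def dyF (n : ℕ) (i : Fin n) : Module.Dual ℝ (Fin n → ℂ) :=
  Complex.imLm.comp ((LinearMap.proj i : (Fin n → ℂ) →ₗ[ℂ] ℂ).restrictScalars ℝ)

/-- `dx_i` as a degree-1 element of the exterior algebra of the dual of `ℂ^n`. -/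
noncomputable def dxE (n : ℕ) (i : Fin n) :
    ExteriorAlgebra ℝ (Module.Dual ℝ (Fin n → ℂ)) :=
  ExteriorAlgebra.ι ℝ (dxF n i)

/-- `dy_i` as a degree-1 element of the exterior algebra of the dual of `ℂ^n`. -/
noncomputable def dyE (n : ℕ) (i : Fin n) :
    ExteriorAlgebra ℝ (Module.Dual ℝ (Fin n → ℂ)) :=
  ExteriorAlgebra.ι ℝ (dyF n i)

/-- The coordinate area form `dx_i ∧ dy_i`. -/
noncomputable def dxyE (n : ℕ) (i : Fin n) :
    ExteriorAlgebra ℝ (Module.Dual ℝ (Fin n → ℂ)) :=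
  dxE n i * dyE n i

/-- The complex volume form of the coordinate subspace `ℂ^n_I`: the wedge of
`dx_i ∧ dy_i` over `i ∉ I` (in increasing order). -/
noncomputable def volForm (n : ℕ) (I : Finset (Fin n)) :
    ExteriorAlgebra ℝ (Module.Dual ℝ (Fin n → ℂ)) :=
  (((Iᶜ).sort (· ≤ ·)).map fun i => dxyE n i).prod

/-- The projection of `ℂ^n` onto the coordinate subspace `ℂ^n_I` (setting the
coordinates in `I` to zero). -/
noncomputable def coordProj (n : ℕ) (I : Finset (Fin n)) :
    (Fin n → ℂ) →ₗ[ℝ] (Fin n → ℂ) where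
  toFun z := fun i => if i ∈ I then 0 else z i
  map_add' := by intro a b; funext i; by_cases h : i ∈ I <;> simp [h]
  map_smul' := by intro c a; funext i; by_cases h : i ∈ I <;> simp [h]

/-- Pullback of exterior forms on `ℂ^n` along the projection onto `ℂ^n_I`; this computes
the restriction of a form to the coordinate subspace `ℂ^n_I`. -/
noncomputable def pullbackI (n : ℕ) (I : Finset (Fin n)) :
    ExteriorAlgebra ℝ (Module.Dual ℝ (Fin n → ℂ)) →ₐ[ℝ]
      ExteriorAlgebra ℝ (Module.Dual ℝ (Fin n → ℂ)) :=
  ExteriorAlgebra.map ((coordProj n I).dualMap)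

/-- The subspace of genuine (grade-2) alternating 2-forms inside the exterior algebra. -/
noncomputable def grade2 (n : ℕ) :
    Submodule ℝ (ExteriorAlgebra ℝ (Module.Dual ℝ (Fin n → ℂ))) :=
  LinearMap.range (ExteriorAlgebra.ι ℝ (M := Module.Dual ℝ (Fin n → ℂ))) ^ 2


section gen
variable {R : Type*} [CommRing R] {M : Type*} [AddCommGroup M] [Module R M]

lemma my_anticomm (x y : M) : ι R x * ι R y = -(ι R y * ι R x) :=
  eq_neg_of_add_eq_zero_left (ι_add_mul_swap x y)

lemma my_central (f g : M) (x : ExteriorAlgebra R M) :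
    x * (ι R f * ι R g) = (ι R f * ι R g) * x := by
  induction x using ExteriorAlgebra.induction with
  | algebraMap r => rw [Algebra.commutes]
  | ι m =>
    calc ι R m * (ι R f * ι R g) = (ι R m * ι R f) * ι R g := by rw [mul_assoc]
      _ = -(ι R f * ι R m) * ι R g := by rw [my_anticomm]
      _ = -(ι R f * (ι R m * ι R g)) := by rw [neg_mul, mul_assoc]
      _ = -(ι R f * -(ι R g * ι R m)) := by rw [← my_anticomm]
      _ = (ι R f * ι R g) * ι R m := by rw [mul_neg, neg_neg, ← mul_assoc]
  | mul a b ha hb => rw [mul_assoc, hb, ← mul_assoc, ha, mul_assoc]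
  | add a b ha hb => rw [add_mul, ha, hb, mul_add]

lemma my_sq (f g : M) : (ι R f * ι R g) * (ι R f * ι R g) = 0 := by
  have h : ι R g * (ι R f * ι R g) = 0 := by
    rw [← mul_assoc, my_anticomm g f, neg_mul, mul_assoc, ι_sq_zero, mul_zero, neg_zero]
  rw [mul_assoc, h, mul_zero]

end gen

lemma my_pow_add {A : Type*} [Ring A] (a b : A) (hc : ∀ x, b * x = x * b)
    (hb : b * b = 0) : ∀ k : ℕ, 1 ≤ k → (a + b) ^ k = a ^ k + k • (a ^ (k - 1) * b) := by
  intro k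
  induction k with
  | zero => omega
  | succ m ih =>
    intro _
    rcases Nat.eq_zero_or_pos m with rfl | hm
    · simp
    · have h := ih hm
      have hm1 : m - 1 + 1 = m := Nat.succ_pred_eq_of_pos hm
      have e1 : (a ^ (m - 1) * b) * a = a ^ m * b := by
        rw [mul_assoc, hc a, ← mul_assoc, ← pow_succ, hm1]
      have e2 : (a ^ (m - 1) * b) * b = 0 := by rw [mul_assoc, hb, mul_zero]
      simp only [Nat.add_sub_cancel]
      calc (a + b) ^ (m + 1) = (a ^ m + m • (a ^ (m - 1) * b)) * (a + b) := by
            rw [pow_succ, h]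
        _ = a ^ m * a + a ^ m * b + m • (a ^ m * b + 0) := by
            rw [add_mul, smul_mul_assoc, mul_add, mul_add, e1, e2]
        _ = a ^ (m + 1) + (m + 1) • (a ^ m * b) := by
            rw [add_zero, ← pow_succ, succ_nsmul]; abel

section coords
variable (n : ℕ)

@[simp] lemma dxF_apply (i : Fin n) (z : Fin n → ℂ) : dxF n i z = (z i).re := rfl
@[simp] lemma dyF_apply (i : Fin n) (z : Fin n → ℂ) : dyF n i z = (z i).im := rfl
@[simp] lemma coordProj_apply (I : Finset (Fin n)) (z : Fin n → ℂ) (j : Fin n) :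
    coordProj n I z j = if j ∈ I then 0 else z j := rfl

lemma dxyE_central (i : Fin n) (x : ExteriorAlgebra ℝ (Module.Dual ℝ (Fin n → ℂ))) :
    x * dxyE n i = dxyE n i * x := my_central _ _ x

lemma dxyE_sq (i : Fin n) : dxyE n i * dxyE n i = 0 := my_sq _ _

lemma dualMap_dxF_mem {I : Finset (Fin n)} {i : Fin n} (hi : i ∈ I) :
    (coordProj n I).dualMap (dxF n i) = 0 := by
  ext z; simp [LinearMap.dualMap_apply, hi]

lemma dualMap_dyF_mem {I : Finset (Fin n)} {i : Fin n} (hi : i ∈ I) :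
    (coordProj n I).dualMap (dyF n i) = 0 := by
  ext z; simp [LinearMap.dualMap_apply, hi]

lemma dualMap_dxF_not_mem {I : Finset (Fin n)} {i : Fin n} (hi : i ∉ I) :
    (coordProj n I).dualMap (dxF n i) = dxF n i := by
  ext z; simp [LinearMap.dualMap_apply, hi]

lemma dualMap_dyF_not_mem {I : Finset (Fin n)} {i : Fin n} (hi : i ∉ I) :
    (coordProj n I).dualMap (dyF n i) = dyF n i := by
  ext z; simp [LinearMap.dualMap_apply, hi]

lemma pullback_dxyE_mem {I : Finset (Fin n)} {i : Fin n} (hi : i ∈ I) :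
    pullbackI n I (dxyE n i) = 0 := by
  rw [dxyE, dxE, dyE, pullbackI, map_mul, map_apply_ι, map_apply_ι, dualMap_dxF_mem n hi,
    map_zero, zero_mul]

lemma pullback_dxyE_not_mem {I : Finset (Fin n)} {i : Fin n} (hi : i ∉ I) :
    pullbackI n I (dxyE n i) = dxyE n i := by
  rw [dxyE, dxE, dyE, pullbackI, map_mul, map_apply_ι, map_apply_ι,
    dualMap_dxF_not_mem n hi, dualMap_dyF_not_mem n hi]

lemma coordProj_comp (I : Finset (Fin n)) (i : Fin n) :
    (coordProj n I).comp (coordProj n ({i} : Finset (Fin n))) = coordProj n (insert i I) := by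
  apply LinearMap.ext; intro z; funext j
  by_cases h1 : j ∈ I <;> by_cases h2 : j = i <;>
    simp [coordProj, h1, h2, Finset.mem_insert]

lemma pullback_comp (I : Finset (Fin n)) (i : Fin n)
    (x : ExteriorAlgebra ℝ (Module.Dual ℝ (Fin n → ℂ))) :
    pullbackI n ({i} : Finset (Fin n)) (pullbackI n I x) = pullbackI n (insert i I) x := by
  rw [pullbackI, pullbackI, pullbackI, ← AlgHom.comp_apply, ExteriorAlgebra.map_comp_map,
    LinearMap.dualMap_comp_dualMap, coordProj_comp]
end coords

section key
variable (n : ℕ)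

lemma dual_decomp (i : Fin n) (f : Module.Dual ℝ (Fin n → ℂ)) :
    f = (coordProj n ({i} : Finset (Fin n))).dualMap f
      + f (Pi.single i 1) • dxF n i + f (Pi.single i Complex.I) • dyF n i := by
  apply LinearMap.ext; intro z
  have hz : z = coordProj n ({i} : Finset (Fin n)) z
      + (z i).re • (Pi.single i (1 : ℂ) : Fin n → ℂ)
      + (z i).im • (Pi.single i Complex.I : Fin n → ℂ) := by
    funext j
    by_cases h : j = i
    · subst h
      simp [Complex.real_smul]
    · simp [h, Pi.single_eq_of_ne h]
  conv_lhs => rw [hz]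
  simp only [map_add, map_smul, LinearMap.add_apply, LinearMap.smul_apply,
    LinearMap.dualMap_apply, dxF_apply, dyF_apply, smul_eq_mul]
  ring

lemma mul_dxyE (i : Fin n) (x : ExteriorAlgebra ℝ (Module.Dual ℝ (Fin n → ℂ))) :
    x * dxyE n i = pullbackI n ({i} : Finset (Fin n)) x * dxyE n i := by
  induction x using ExteriorAlgebra.induction with
  | algebraMap r => rw [AlgHom.commutes]
  | ι f =>
    rw [pullbackI, map_apply_ι]
    conv_lhs => rw [dual_decomp n i f]
    rw [map_add, map_add, LinearMap.map_smul, LinearMap.map_smul, add_mul, add_mul,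
      smul_mul_assoc, smul_mul_assoc]
    have h1 : ι ℝ (dxF n i) * dxyE n i = 0 := by
      rw [dxyE, dxE, ← mul_assoc, ι_sq_zero, zero_mul]
    have h2 : ι ℝ (dyF n i) * dxyE n i = 0 := by
      rw [dxyE, dxE, dyE, ← mul_assoc, my_anticomm (dyF n i) (dxF n i), neg_mul, mul_assoc,
        ι_sq_zero, mul_zero, neg_zero]
    rw [h1, h2, smul_zero, smul_zero, add_zero, add_zero]
  | mul a b ha hb =>
    calc a * b * dxyE n i = a * (b * dxyE n i) := mul_assoc _ _ _
      _ = a * (pullbackI n ({i} : Finset (Fin n)) b * dxyE n i) := by rw [hb]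
      _ = a * (dxyE n i * pullbackI n ({i} : Finset (Fin n)) b) := by rw [dxyE_central]
      _ = (a * dxyE n i) * pullbackI n ({i} : Finset (Fin n)) b := by rw [mul_assoc]
      _ = (pullbackI n ({i} : Finset (Fin n)) a * dxyE n i)
            * pullbackI n ({i} : Finset (Fin n)) b := by rw [ha]
      _ = pullbackI n ({i} : Finset (Fin n)) a
            * (dxyE n i * pullbackI n ({i} : Finset (Fin n)) b) := by rw [mul_assoc]
      _ = pullbackI n ({i} : Finset (Fin n)) a
            * (pullbackI n ({i} : Finset (Fin n)) b * dxyE n i) := by rw [dxyE_central]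
      _ = pullbackI n ({i} : Finset (Fin n)) (a * b) * dxyE n i := by rw [map_mul, mul_assoc]
  | add a b ha hb => rw [add_mul, ha, hb, ← add_mul, ← map_add]

lemma my_pairwise {α : Type*} {R : α → α → Prop} (h : ∀ a b, R a b) :
    ∀ l : List α, l.Pairwise R
  | [] => List.Pairwise.nil
  | a :: t => List.Pairwise.cons (fun b _ => h a b) (my_pairwise h t)

lemma volForm_insert {i : Fin n} {I : Finset (Fin n)} (hi : i ∉ I) :
    volForm n (insert i I) * dxyE n i = volForm n I := by
  rw [volForm, volForm]
  have hmem : i ∈ Iᶜ.val := Finset.mem_def.mp (Finset.mem_compl.mpr hi)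
  have hperm : List.Perm ((insert i I)ᶜ.sort (· ≤ ·) ++ [i]) (Iᶜ.sort (· ≤ ·)) := by
    rw [← Multiset.coe_eq_coe]
    show ((insert i I)ᶜ.sort (· ≤ ·) : Multiset (Fin n)) + (↑([i] : List (Fin n))) = _
    rw [Finset.sort_eq, Finset.sort_eq, Finset.compl_insert, add_comm,
      Multiset.coe_singleton, Multiset.singleton_add, Finset.erase_val]
    exact Multiset.cons_erase hmem
  have hpc : ((((insert i I)ᶜ.sort (· ≤ ·) ++ [i]).map fun j => dxyE n j)).Pairwise Commute :=
    List.pairwise_map.mpr (my_pairwise (fun a b => dxyE_central n b (dxyE n a)) _)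
  calc (((insert i I)ᶜ.sort (· ≤ ·)).map fun j => dxyE n j).prod * dxyE n i
      = ((((insert i I)ᶜ.sort (· ≤ ·) ++ [i]).map fun j => dxyE n j)).prod := by
        rw [List.map_append, List.prod_append]; simp
    _ = ((Iᶜ.sort (· ≤ ·)).map fun j => dxyE n j).prod :=
        List.Perm.prod_eq' (hperm.map _) hpc

end key

section contract
variable (n : ℕ)

noncomputable abbrev cL (v : Fin n → ℂ) :
    ExteriorAlgebra ℝ (Module.Dual ℝ (Fin n → ℂ)) →ₗ[ℝ]
      ExteriorAlgebra ℝ (Module.Dual ℝ (Fin n → ℂ)) :=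
  CliffordAlgebra.contractLeft (Q := (0 : QuadraticForm ℝ (Module.Dual ℝ (Fin n → ℂ))))
    (Module.Dual.eval ℝ (Fin n → ℂ) v)

lemma cL_ι_mul (v : Fin n → ℂ) (f : Module.Dual ℝ (Fin n → ℂ))
    (x : ExteriorAlgebra ℝ (Module.Dual ℝ (Fin n → ℂ))) :
    cL n v (ι ℝ f * x) = f v • x - ι ℝ f * cL n v x := by
  have h := CliffordAlgebra.contractLeft_ι_mul
    (Q := (0 : QuadraticForm ℝ (Module.Dual ℝ (Fin n → ℂ))))
    (d := Module.Dual.eval ℝ (Fin n → ℂ) v) f x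
  simpa [cL] using h

lemma cL_one (v : Fin n → ℂ) : cL n v 1 = 0 :=
  CliffordAlgebra.contractLeft_one
    (Q := (0 : QuadraticForm ℝ (Module.Dual ℝ (Fin n → ℂ))))
    (Module.Dual.eval ℝ (Fin n → ℂ) v)

lemma cL_dxy_ne (c : ℂ) {m j : Fin n} (h : m ≠ j)
    (x : ExteriorAlgebra ℝ (Module.Dual ℝ (Fin n → ℂ))) :
    cL n (Pi.single j c) (dxyE n m * x) = dxyE n m * cL n (Pi.single j c) x := by
  rw [dxyE, dxE, dyE, mul_assoc, cL_ι_mul]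
  have h1 : dxF n m (Pi.single j c) = 0 := by simp [Pi.single_eq_of_ne h]
  have h2 : dyF n m (Pi.single j c) = 0 := by simp [Pi.single_eq_of_ne h]
  rw [h1, cL_ι_mul, h2, zero_smul, zero_smul, zero_sub, zero_sub, mul_neg, neg_neg, mul_assoc]

lemma cL_main1 (j : Fin n) (x : ExteriorAlgebra ℝ (Module.Dual ℝ (Fin n → ℂ)))
    (hx : cL n (Pi.single j 1) x = 0) :
    cL n (Pi.single j 1) (dxyE n j * x) = dyE n j * x := by
  rw [dxyE, dxE, dyE, mul_assoc, cL_ι_mul, cL_ι_mul, hx]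
  simp

lemma cL_main2 (j : Fin n) (x : ExteriorAlgebra ℝ (Module.Dual ℝ (Fin n → ℂ)))
    (hx : cL n (Pi.single j Complex.I) x = 0) :
    cL n (Pi.single j Complex.I) (dyE n j * x) = x := by
  rw [dyE, cL_ι_mul, hx]
  simp

lemma cL_single_prod (j : Fin n) (c : ℂ) :
    ∀ l : List (Fin n), j ∉ l →
      cL n (Pi.single j c) ((l.map fun m => dxyE n m).prod) = 0 := by
  intro l
  induction l with
  | nil => intro _; simpa using cL_one n (Pi.single j c)
  | cons m t ih =>
    intro hj
    rw [List.map_cons, List.prod_cons, cL_dxy_ne n c (fun h => hj (by rw [← h]; exact List.mem_cons_self)),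
      ih (fun h => hj (List.mem_cons_of_mem m h)), mul_zero]

lemma prod_dxyE_ne_zero : ∀ l : List (Fin n), l.Nodup →
    ((l.map fun m => dxyE n m).prod) ≠ 0 := by
  intro l
  induction l with
  | nil =>
    intro _
    simp only [List.map_nil, List.prod_nil]
    exact one_ne_zero
  | cons m t ih =>
    intro hnd h
    rw [List.map_cons, List.prod_cons] at h
    have hm : m ∉ t := (List.nodup_cons.mp hnd).1
    have ht := ih (List.nodup_cons.mp hnd).2
    have hP1 : cL n (Pi.single m 1) ((t.map fun k => dxyE n k).prod) = 0 :=
      cL_single_prod n m 1 t hm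
    have hP2 : cL n (Pi.single m Complex.I) ((t.map fun k => dxyE n k).prod) = 0 :=
      cL_single_prod n m Complex.I t hm
    have e1 := cL_main1 n m _ hP1
    have e2 := cL_main2 n m _ hP2
    apply ht
    calc (t.map fun k => dxyE n k).prod
        = cL n (Pi.single m Complex.I) (dyE n m * (t.map fun k => dxyE n k).prod) := e2.symm
      _ = cL n (Pi.single m Complex.I) (cL n (Pi.single m 1)
            (dxyE n m * (t.map fun k => dxyE n k).prod)) := by rw [e1]
      _ = 0 := by rw [h, map_zero, map_zero]

lemma volForm_ne_zero (I : Finset (Fin n)) : volForm n I ≠ 0 :=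
  prod_dxyE_ne_zero n _ (Finset.sort_nodup _ _)

end contract

/-- Corollary 3.3: let `Ω` be an alternating bilinear 2-form on `ℂ^n`
(not assumed nondegenerate on all of `ℂ^n`) such that for every nonempty `I ⊆ {1,…,n}`
the restriction `Ω|_{ℂ^n_I}` is nondegenerate with the `Ω`-orientation equal to the
complex orientation (encoded: the top power of the restriction is a positive multiple of
the complex volume form of `ℂ^n_I`). Then for all nonempty `I`, all `s ≥ 0` and all `i`,
the restriction of `Ω + s·dx_i∧dy_i` to `ℂ^n_I` is nondegenerate. -/
theorem stmt1 (n : ℕ) (ω : ExteriorAlgebra ℝ (Module.Dual ℝ (Fin n → ℂ)))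
    (hgrade : ω ∈ grade2 n)
    (hsympl : ∀ I : Finset (Fin n), I.Nonempty → ∃ c : ℝ, 0 < c ∧
      pullbackI n I ω ^ (n - I.card) = c • volForm n I) :
    ∀ I : Finset (Fin n), I.Nonempty → ∀ (s : ℝ), 0 ≤ s → ∀ i : Fin n,
      pullbackI n I (ω + s • dxyE n i) ^ (n - I.card) ≠ 0 := by
  intro I hI s hs i
  rcases Nat.eq_zero_or_pos (n - I.card) with h0 | hpos
  · rw [h0, pow_zero]; exact one_ne_zero
  by_cases hi : i ∈ I
  · rw [map_add, map_smul, pullback_dxyE_mem n hi, smul_zero, add_zero]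
    obtain ⟨c, hc, hcv⟩ := hsympl I hI
    rw [hcv]
    exact smul_ne_zero hc.ne' (volForm_ne_zero n I)
  · set J : Finset (Fin n) := insert i I with hJ
    have hJcard : J.card = I.card + 1 := Finset.card_insert_of_notMem hi
    have hJn : J.card ≤ n := by
      have := Finset.card_le_card (Finset.subset_univ J)
      simpa using this
    have hIn : I.card + 1 ≤ n := hJcard ▸ hJn
    set k := n - I.card with hk
    have hk1 : 1 ≤ k := by omega
    have hkJ : k - 1 = n - J.card := by omega
    obtain ⟨cI, hcI, hcvI⟩ := hsympl I hI
    obtain ⟨cJ, hcJ, hcvJ⟩ := hsympl J (Finset.insert_nonempty _ _)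
    set a := pullbackI n I ω with ha
    set b := (s • dxyE n i : ExteriorAlgebra ℝ (Module.Dual ℝ (Fin n → ℂ))) with hb
    have hexp : pullbackI n I (ω + s • dxyE n i) = a + b := by
      rw [map_add, map_smul, pullback_dxyE_not_mem n hi]
    have hbc : ∀ x, b * x = x * b := by
      intro x
      rw [hb, smul_mul_assoc, mul_smul_comm, dxyE_central]
    have hbb : b * b = 0 := by
      rw [hb, smul_mul_assoc, mul_smul_comm, dxyE_sq, smul_zero, smul_zero]
    have hpow : (a + b) ^ k = a ^ k + k • (a ^ (k - 1) * b) :=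
      my_pow_add a b hbc hbb k hk1
    have hterm : a ^ (k - 1) * b = (s * cJ) • volForm n I := by
      rw [hb, mul_smul_comm, mul_dxyE, map_pow, pullback_comp, ← hJ, hkJ, hcvJ,
        smul_mul_assoc, volForm_insert n hi, smul_smul]
    rw [hexp, hpow, hcvI, hterm, ← Nat.cast_smul_eq_nsmul ℝ k, smul_smul, ← add_smul]
    have hpos' : 0 < cI + (k : ℝ) * (s * cJ) :=
      add_pos_of_pos_of_nonneg hcI
        (mul_nonneg (Nat.cast_nonneg k) (mul_nonneg hs hcJ.le))
    exact smul_ne_zero hpos'.ne' (volForm_ne_zero n I)
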